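/- Let (Ω, 𝒜, P) be a probability space, let n, d ≥ 1 and 1 ≤ m ≤ d, let μ : Fin d → ℝ satisfy 0 < μ j < 1 for every j ≥ m, and let X : Fin n → Fin d → Ω → ℕ have left-repeated structure with midpoint m and parameter μ. Let y : Fin d → ℕ and k : Fin d → ℕ satisfy: y j ≤ 1 and y j ≤ k j ≤ n for every j ≥ m, and k j = k m and y j = y m for every j < m. Then P({ω : for every j ∈ Fin d, y j + Σ_{i < n−1} X i j (ω) = k j}) / P({ω : for every j ∈ Fin d, Σ_{i < n} X i j (ω) = k j}) = ∏_{j ≥ m} (if y j = 1 then (k j / n) / μ j else (1 − k j / n) / (1 − μ j)); in particular the denominator probability is strictly positive. (Partial Ratio Equality, side = left: the Bayesian decision ratio on a population whose attributes below the midpoint are exact copies of attribute m equals the likelihood ratio test statistic clipped to the attributes from m to d.) -/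

import Mathlib

open MeasureTheory ProbabilityTheory Finset

/-- `X : Fin n → Fin d → Ω → ℕ` has *left-repeated structure* with midpoint `m`
(in one-based terms, `1 ≤ m ≤ d`, corresponding to the zero-based index `m - 1`)
and parameter `μ`: the subfamily `(X i j)` over all records `i` and attributes
`j ≥ m` (zero-based `m - 1 ≤ (j : ℕ)`) is mutually independent, each such `X i j`
is `{0,1}`-valued with `P(X i j = 1) = μ j`, and every attribute `j < m`
(zero-based `(j : ℕ) < m - 1`) is an exact copy of attribute `m` (zero-based
index `m - 1`). -/
def LeftRepeated {Ω : Type*} [MeasurableSpace Ω] (P : Measure Ω)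
    {n d : ℕ} (m : ℕ) (X : Fin n → Fin d → Ω → ℕ) (μ : Fin d → ℝ) : Prop :=
  (∀ i j, Measurable (X i j)) ∧
  iIndepFun
    (fun p : Fin n × {j : Fin d // m - 1 ≤ (j : ℕ)} => X p.1 p.2.1) P ∧
  (∀ i, ∀ j : Fin d, m - 1 ≤ (j : ℕ) →
    (∀ ω, X i j ω = 0 ∨ X i j ω = 1) ∧ (P {ω | X i j ω = 1}).toReal = μ j) ∧
  (∀ i, ∀ j : Fin d, (j : ℕ) < m - 1 →
    ∀ jm : Fin d, (jm : ℕ) = m - 1 → X i j = X i jm)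


private lemma colsum {n : ℕ} (R : Finset (Fin n)) (t : ℕ) (a b : ℝ) :
    ∑ T ∈ R.powersetCard t, ∏ i ∈ R, (if i ∈ T then a else b)
      = (R.card.choose t : ℝ) * a ^ t * b ^ (R.card - t) := by
  have h : ∀ T ∈ R.powersetCard t,
      (∏ i ∈ R, (if i ∈ T then a else b)) = a ^ t * b ^ (R.card - t) := by
    intro T hT
    rw [Finset.mem_powersetCard] at hT
    obtain ⟨hsub, hcard⟩ := hT
    rw [← Finset.prod_sdiff hsub]
    have h1 : ∏ i ∈ T, (if i ∈ T then a else b) = a ^ t := by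
      rw [Finset.prod_congr rfl (fun i hi => if_pos hi), Finset.prod_const, hcard]
    have h2 : ∏ i ∈ R \ T, (if i ∈ T then a else b) = b ^ (R.card - t) := by
      rw [Finset.prod_congr rfl (fun i hi => if_neg (Finset.mem_sdiff.mp hi).2),
        Finset.prod_const, Finset.card_sdiff_of_subset hsub, hcard]
    rw [h1, h2]; ring
  rw [Finset.sum_congr rfl h, Finset.sum_const, Finset.card_powersetCard, nsmul_eq_mul]
  ring

private abbrev Att (d m : ℕ) : Type := {j : Fin d // m - 1 ≤ (j : ℕ)}

private lemma core {Ω : Type*} [MeasurableSpace Ω] (P : Measure Ω) [IsProbabilityMeasure P]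
    {n d m : ℕ} {X : Fin n → Fin d → Ω → ℕ} {μ : Fin d → ℝ}
    (hmeas : ∀ i j, Measurable (X i j))
    (hind : iIndepFun
      (fun p : Fin n × {j : Fin d // m - 1 ≤ (j : ℕ)} => X p.1 p.2.1) P)
    (hber : ∀ i, ∀ j : Fin d, m - 1 ≤ (j : ℕ) →
      (∀ ω, X i j ω = 0 ∨ X i j ω = 1) ∧ (P {ω | X i j ω = 1}).toReal = μ j)
    (hμ : ∀ j : Fin d, m - 1 ≤ (j : ℕ) → 0 ≤ μ j ∧ μ j ≤ 1)
    (R : Finset (Fin n)) (t : Att d m → ℕ) :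
    (P {ω | ∀ j : Att d m, ∑ i ∈ R, X i j.1 ω = t j}).toReal
      = ∏ j : Att d m,
          ((R.card.choose (t j) : ℝ) * μ j.1 ^ (t j) * (1 - μ j.1) ^ (R.card - t j)) := by
  classical
  have hmeas1 : ∀ (i : Fin n) (j : Att d m) (c : ℕ), MeasurableSet (X i j.1 ⁻¹' {c}) := by
    intro i j c
    exact (hmeas i j.1) (measurableSet_singleton c)
  have h1 : ∀ (i : Fin n) (j : Att d m), P (X i j.1 ⁻¹' {1}) = ENNReal.ofReal (μ j.1) := by
    intro i j
    rw [show X i j.1 ⁻¹' {1} = {ω | X i j.1 ω = 1} from rfl]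
    rw [← (hber i j.1 j.2).2, ENNReal.ofReal_toReal (measure_ne_top P _)]
  have h0 : ∀ (i : Fin n) (j : Att d m), P (X i j.1 ⁻¹' {0}) = ENNReal.ofReal (1 - μ j.1) := by
    intro i j
    have hc : X i j.1 ⁻¹' {0} = (X i j.1 ⁻¹' {1})ᶜ := by
      ext ω
      have := (hber i j.1 j.2).1 ω
      simp only [Set.mem_preimage, Set.mem_singleton_iff, Set.mem_compl_iff]
      omega
    rw [hc, prob_compl_eq_one_sub (hmeas1 i j 1), h1 i j,
      ENNReal.ofReal_sub 1 ((hμ j.1 j.2).1), ENNReal.ofReal_one]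
  have hnn : ∀ (j : Att d m) (c : Prop) [Decidable c], (0:ℝ) ≤ if c then μ j.1 else 1 - μ j.1 := by
    intro j c _
    have := hμ j.1 j.2
    split <;> [exact this.1; linarith [this.2]]
  set E : (Att d m → Finset (Fin n)) → Set Ω := fun f =>
    ⋂ p ∈ R ×ˢ (univ : Finset (Att d m)), X p.1 p.2.1 ⁻¹' {if p.1 ∈ f p.2 then 1 else 0} with hE
  have hEmeas : ∀ f, MeasurableSet (E f) :=
    fun f => Finset.measurableSet_biInter _ (fun p _ => hmeas1 p.1 p.2 _)
  have hPE : ∀ f, P (E f) =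
      ENNReal.ofReal (∏ j : Att d m, ∏ i ∈ R, (if i ∈ f j then μ j.1 else 1 - μ j.1)) := by
    intro f
    rw [hE]
    rw [hind.meas_biInter (S := R ×ˢ (univ : Finset (Att d m)))
      (fun p _ => ⟨{if p.1 ∈ f p.2 then 1 else 0}, trivial, rfl⟩)]
    rw [Finset.prod_product_right]
    have heq : ∀ j ∈ (univ : Finset (Att d m)), ∏ i ∈ R, P (X i j.1 ⁻¹' {if i ∈ f j then 1 else 0})
        = ∏ i ∈ R, ENNReal.ofReal (if i ∈ f j then μ j.1 else 1 - μ j.1) := by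
      intro j _
      apply Finset.prod_congr rfl
      intro i _
      by_cases h : i ∈ f j
      · simp only [h, if_true]; exact h1 i j
      · simp only [h, if_false]; exact h0 i j
    rw [Finset.prod_congr rfl heq]
    rw [ENNReal.ofReal_prod_of_nonneg (fun j _ => Finset.prod_nonneg (fun i _ => hnn j _))]
    exact Finset.prod_congr rfl (fun j _ =>
      (ENNReal.ofReal_prod_of_nonneg (fun i _ => hnn j _)).symm)
  set F : Finset (Att d m → Finset (Fin n)) := Fintype.piFinset (fun j => R.powersetCard (t j))
    with hF
  have hunion : {ω | ∀ j : Att d m, ∑ i ∈ R, X i j.1 ω = t j} = ⋃ f ∈ F, E f := by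
    ext ω
    simp only [Set.mem_setOf_eq, Set.mem_iUnion, hE, hF, Set.mem_iInter, Set.mem_preimage,
      Set.mem_singleton_iff, Finset.mem_product, Fintype.mem_piFinset, Finset.mem_powersetCard,
      Finset.mem_univ, and_true, exists_prop]
    constructor
    · intro h
      refine ⟨fun j => R.filter (fun i => X i j.1 ω = 1),
        fun j => ⟨Finset.filter_subset _ _, ?_⟩, ?_⟩
      · rw [← h j, Finset.card_filter]
        apply Finset.sum_congr rfl
        intro i _
        rcases (hber i j.1 j.2).1 ω with h0' | h1'
        · simp [h0']
        · simp [h1']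
      · intro p hp
        by_cases hmem : p.1 ∈ Finset.filter (fun i => X i p.2.1 ω = 1) R
        · rw [if_pos hmem]; exact (Finset.mem_filter.mp hmem).2
        · rw [if_neg hmem]
          rcases (hber p.1 p.2.1 p.2.2).1 ω with h0' | h1'
          · exact h0'
          · exact absurd (Finset.mem_filter.mpr ⟨hp, h1'⟩) hmem
    · rintro ⟨f, hfF, hf⟩ j
      have hs : ∑ i ∈ R, X i j.1 ω = ∑ i ∈ R, (if i ∈ f j then 1 else 0) :=
        Finset.sum_congr rfl (fun i hi => hf (i, j) hi)
      rw [hs, Finset.sum_ite_mem, Finset.sum_const,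
        Finset.inter_eq_right.mpr (hfF j).1, smul_eq_mul, mul_one, (hfF j).2]
  have hdisj : (↑F : Set (Att d m → Finset (Fin n))).PairwiseDisjoint E := by
    intro f hf g hg hfg
    simp only [Finset.mem_coe, hF, Fintype.mem_piFinset, Finset.mem_powersetCard] at hf hg
    obtain ⟨j, hj⟩ : ∃ j, f j ≠ g j := by
      by_contra h; push_neg at h; exact hfg (funext h)
    obtain ⟨i, hi⟩ : ∃ i, ¬ (i ∈ f j ↔ i ∈ g j) := by
      by_contra h; push_neg at h; exact hj (Finset.ext h)
    have hiR : i ∈ R := by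
      rcases Classical.em (i ∈ f j) with h | h
      · exact (hf j).1 h
      · exact (hg j).1 (by tauto)
    rw [Function.onFun, Set.disjoint_left]
    intro ω hωf hωg
    rw [hE] at hωf hωg
    have h1' := Set.mem_iInter₂.mp hωf (i, j) (Finset.mem_product.mpr ⟨hiR, Finset.mem_univ j⟩)
    have h2' := Set.mem_iInter₂.mp hωg (i, j) (Finset.mem_product.mpr ⟨hiR, Finset.mem_univ j⟩)
    simp only [Set.mem_preimage, Set.mem_singleton_iff] at h1' h2'
    by_cases hmf : i ∈ f j <;> by_cases hmg : i ∈ g j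
    · exact hi ⟨fun _ => hmg, fun _ => hmf⟩
    · rw [if_pos hmf] at h1'; rw [if_neg hmg] at h2'; omega
    · rw [if_neg hmf] at h1'; rw [if_pos hmg] at h2'; omega
    · exact hi ⟨fun h => absurd h hmf, fun h => absurd h hmg⟩
  rw [hunion, measure_biUnion_finset hdisj (fun f _ => hEmeas f),
    Finset.sum_congr rfl (fun f _ => hPE f),
    ← ENNReal.ofReal_sum_of_nonneg
      (fun f _ => Finset.prod_nonneg (fun j _ => Finset.prod_nonneg (fun i _ => hnn j _))),
    ENNReal.toReal_ofReal
      (Finset.sum_nonneg (fun f _ =>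
        Finset.prod_nonneg (fun j _ => Finset.prod_nonneg (fun i _ => hnn j _))))]
  rw [hF]
  have hps := Finset.prod_univ_sum (fun j : Att d m => R.powersetCard (t j))
    (fun j T => ∏ i ∈ R, if i ∈ T then μ j.1 else 1 - μ j.1)
  rw [← hps]
  exact Finset.prod_congr rfl (fun j _ => colsum R (t j) (μ j.1) (1 - μ j.1))

private lemma cardfilt (n : ℕ) :
    ((univ : Finset (Fin n)).filter (fun i : Fin n => (i : ℕ) < n - 1)).card = n - 1 := by
  apply Finset.card_eq_of_bijective (fun i hi => ⟨i, by omega⟩)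
  · intro a ha
    rw [Finset.mem_filter] at ha
    exact ⟨a, ha.2, rfl⟩
  · intro i hi; simp [Finset.mem_filter]; omega
  · intro i j hi hj hij
    simpa [Fin.ext_iff] using hij

private lemma chooseid1 (n K : ℕ) (hn : 1 ≤ n) (hK : 1 ≤ K) :
    n * (n-1).choose (K-1) = n.choose K * K := by
  have h := Nat.add_one_mul_choose_eq (n-1) (K-1)
  have h2 : n - 1 + 1 = n := by omega
  have h3 : K - 1 + 1 = K := by omega
  rw [h2, h3] at h
  exact h

private lemma chooseid0 (n K : ℕ) (hn : 1 ≤ n) :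
    n * (n-1).choose K = n.choose K * (n - K) := by
  have h := Nat.add_one_mul_choose_eq (n-1) K
  have h2 : n - 1 + 1 = n := by omega
  rw [h2] at h
  rw [h, Nat.choose_succ_right_eq]

private lemma factor (n K Y : ℕ) (v : ℝ) (hn : 1 ≤ n) (hY : Y ≤ 1) (hYK : Y ≤ K)
    (hKn : K ≤ n) (h0 : 0 < v) (h1 : v < 1) :
    ((n-1).choose (K-Y) : ℝ) * v ^ (K-Y) * (1-v) ^ ((n-1) - (K-Y)) /
      ((n.choose K : ℝ) * v ^ K * (1-v) ^ (n-K))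
    = if Y = 1 then ((K:ℝ)/n)/v else (1 - (K:ℝ)/n)/(1-v) := by
  have hv1 : (0:ℝ) < 1 - v := by linarith
  have hb : (0:ℝ) < (n.choose K : ℝ) * v ^ K * (1-v) ^ (n-K) := by
    have := Nat.choose_pos hKn
    positivity
  have hnR : (0:ℝ) < n := by exact_mod_cast hn
  interval_cases Y
  · -- Y = 0
    simp only [Nat.sub_zero, if_neg (by omega : ¬ (0:ℕ) = 1)]
    have hr : 1 - (K:ℝ)/n = ((n:ℝ)-K)/n := by field_simp
    rw [hr, div_div]
    rcases eq_or_lt_of_le hKn with hKeq | hKlt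
    · subst hKeq
      rw [Nat.choose_eq_zero_of_lt (by omega : K - 1 < K)]
      simp
    · have hKn1 : K ≤ n - 1 := by omega
      rw [div_eq_div_iff hb.ne' (by positivity)]
      have key : (n:ℝ) * ((n-1).choose K : ℝ) = (n.choose K : ℝ) * ((n:ℝ) - K) := by
        have := chooseid0 n K hn
        have hc : ((n - K : ℕ) : ℝ) = (n:ℝ) - K := by
          rw [Nat.cast_sub hKn]
        calc (n:ℝ) * ((n-1).choose K : ℝ) = ((n * (n-1).choose K : ℕ) : ℝ) := by push_cast; ring
          _ = ((n.choose K * (n - K) : ℕ) : ℝ) := by rw [this]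
          _ = (n.choose K : ℝ) * ((n:ℝ) - K) := by rw [Nat.cast_mul, hc]
      have hexp : n - K = ((n-1) - K) + 1 := by omega
      calc ((n-1).choose K : ℝ) * v ^ K * (1-v) ^ ((n-1) - K) * ((n:ℝ) * (1 - v))
          = ((n:ℝ) * ((n-1).choose K : ℝ)) * v ^ K * ((1-v) ^ ((n-1) - K) * (1-v)) := by ring
        _ = ((n.choose K : ℝ) * ((n:ℝ) - K)) * v ^ K * (1-v) ^ (n - K) := by
            rw [key, hexp, pow_succ]
        _ = ((n:ℝ) - K) * ((n.choose K : ℝ) * v ^ K * (1-v) ^ (n-K)) := by ring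
  · -- Y = 1
    simp only [if_pos rfl, if_true]
    rw [div_div]
    have hK1 : 1 ≤ K := hYK
    rw [div_eq_div_iff hb.ne' (by positivity)]
    have key : (n:ℝ) * ((n-1).choose (K-1) : ℝ) = (n.choose K : ℝ) * (K:ℝ) := by
      have := chooseid1 n K hn hK1
      calc (n:ℝ) * ((n-1).choose (K-1) : ℝ) = ((n * (n-1).choose (K-1) : ℕ) : ℝ) := by
            push_cast; ring
        _ = ((n.choose K * K : ℕ) : ℝ) := by rw [this]
        _ = (n.choose K : ℝ) * (K:ℝ) := by push_cast; ring
    have hexp : (n-1) - (K-1) = n - K := by omega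
    have hexp2 : K = (K-1) + 1 := by omega
    calc ((n-1).choose (K-1) : ℝ) * v ^ (K-1) * (1-v) ^ ((n-1) - (K-1)) * ((n:ℝ) * v)
        = ((n:ℝ) * ((n-1).choose (K-1) : ℝ)) * (v ^ (K-1) * v) * (1-v) ^ ((n-1) - (K-1)) := by
          ring
      _ = ((n.choose K : ℝ) * (K:ℝ)) * v ^ K * (1-v) ^ (n - K) := by
          rw [key, hexp, ← pow_succ, ← hexp2]
      _ = (K:ℝ) * ((n.choose K : ℝ) * v ^ K * (1-v) ^ (n-K)) := by ring

/-- **Partial Ratio Equality (side = left).** On a population whose attributes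
below the midpoint `m` are exact copies of attribute `m`, the Bayesian decision
ratio equals the likelihood ratio test statistic clipped to attributes `m`
through `d`; in particular the denominator probability is strictly positive. -/
theorem partial_ratio_equality_left {Ω : Type*} [MeasurableSpace Ω]
    (P : Measure Ω) [IsProbabilityMeasure P] (n d m : ℕ)
    (hn : 1 ≤ n) (hd : 1 ≤ d) (hm : 1 ≤ m) (hmd : m ≤ d)
    (μ : Fin d → ℝ) (hμ : ∀ j : Fin d, m - 1 ≤ (j : ℕ) → 0 < μ j ∧ μ j < 1)
    (X : Fin n → Fin d → Ω → ℕ) (hX : LeftRepeated P m X μ)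
    (y : Fin d → ℕ) (k : Fin d → ℕ)
    (hyk : ∀ j : Fin d, m - 1 ≤ (j : ℕ) → y j ≤ 1 ∧ y j ≤ k j ∧ k j ≤ n)
    (hrep : ∀ j : Fin d, (j : ℕ) < m - 1 →
      k j = k ⟨m - 1, by omega⟩ ∧ y j = y ⟨m - 1, by omega⟩) :
    0 < (P {ω | ∀ j, (∑ i : Fin n, X i j ω) = k j}).toReal ∧
    (P {ω | ∀ j, y j + ∑ i ∈ univ.filter (fun i : Fin n => (i : ℕ) < n - 1),
        X i j ω = k j}).toReal /
      (P {ω | ∀ j, (∑ i : Fin n, X i j ω) = k j}).toReal =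
    ∏ j ∈ univ.filter (fun j : Fin d => m - 1 ≤ (j : ℕ)),
      (if y j = 1 then ((k j : ℝ) / n) / μ j
        else (1 - (k j : ℝ) / n) / (1 - μ j)) := by
  classical
  obtain ⟨hmeas, hind, hber, hcopy⟩ := hX
  have hμ' : ∀ j : Fin d, m - 1 ≤ (j:ℕ) → 0 ≤ μ j ∧ μ j ≤ 1 :=
    fun j hj => ⟨(hμ j hj).1.le, (hμ j hj).2.le⟩
  have hjmlt : m - 1 < d := by omega
  have hBset : {ω : Ω | ∀ j, (∑ i : Fin n, X i j ω) = k j}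
      = {ω : Ω | ∀ j : Att d m, ∑ i ∈ (univ : Finset (Fin n)), X i j.1 ω
          = (fun j : Att d m => k j.1) j} := by
    ext ω
    simp only [Set.mem_setOf_eq]
    constructor
    · exact fun h j => h j.1
    · intro h j
      by_cases hj : m - 1 ≤ (j:ℕ)
      · exact h ⟨j, hj⟩
      · push_neg at hj
        have h1 : ∀ i, X i j = X i ⟨m-1, hjmlt⟩ := fun i => hcopy i j hj ⟨m-1, hjmlt⟩ rfl
        have h2 : ∑ i : Fin n, X i (⟨m-1, hjmlt⟩ : Fin d) ω = k ⟨m-1, hjmlt⟩ :=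
          h ⟨⟨m-1, hjmlt⟩, le_refl _⟩
        have hk : k j = k ⟨m-1, hjmlt⟩ := (hrep j hj).1
        rw [Finset.sum_congr rfl (fun i _ => by rw [h1 i]), h2, hk]
  have hAset : {ω : Ω | ∀ j, y j + ∑ i ∈ univ.filter (fun i : Fin n => (i : ℕ) < n - 1),
        X i j ω = k j}
      = {ω : Ω | ∀ j : Att d m, ∑ i ∈ univ.filter (fun i : Fin n => (i : ℕ) < n - 1),
          X i j.1 ω = (fun j : Att d m => k j.1 - y j.1) j} := by
    ext ω
    simp only [Set.mem_setOf_eq]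
    constructor
    · intro h j
      have h2 := h j.1
      have hy := hyk j.1 j.2
      omega
    · intro h j
      by_cases hj : m - 1 ≤ (j:ℕ)
      · have h2 : ∑ i ∈ univ.filter (fun i : Fin n => (i : ℕ) < n - 1), X i j ω
            = k j - y j := h ⟨j, hj⟩
        have hy := hyk j hj
        omega
      · push_neg at hj
        have h1 : ∀ i, X i j = X i ⟨m-1, hjmlt⟩ := fun i => hcopy i j hj ⟨m-1, hjmlt⟩ rfl
        have hsum : ∑ i ∈ univ.filter (fun i : Fin n => (i : ℕ) < n - 1), X i j ω
            = ∑ i ∈ univ.filter (fun i : Fin n => (i : ℕ) < n - 1), X i (⟨m-1, hjmlt⟩ : Fin d) ω :=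
          Finset.sum_congr rfl (fun i _ => by rw [h1 i])
        have h2 : ∑ i ∈ univ.filter (fun i : Fin n => (i : ℕ) < n - 1),
            X i (⟨m-1, hjmlt⟩ : Fin d) ω = k ⟨m-1, hjmlt⟩ - y ⟨m-1, hjmlt⟩ :=
          h ⟨⟨m-1, hjmlt⟩, le_refl _⟩
        have hy := hyk ⟨m-1, hjmlt⟩ (le_refl _)
        have hk : k j = k ⟨m-1, hjmlt⟩ := (hrep j hj).1
        have hyj : y j = y ⟨m-1, hjmlt⟩ := (hrep j hj).2
        rw [hsum]
        omega
  have hB := core P hmeas hind hber hμ' (univ : Finset (Fin n)) (fun j : Att d m => k j.1)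
  have hA := core P hmeas hind hber hμ'
    (univ.filter (fun i : Fin n => (i : ℕ) < n - 1)) (fun j : Att d m => k j.1 - y j.1)
  rw [show (univ : Finset (Fin n)).card = n by simp] at hB
  rw [cardfilt n] at hA
  have hbpos : ∀ j : Att d m,
      0 < (n.choose (k j.1) : ℝ) * μ j.1 ^ (k j.1) * (1 - μ j.1) ^ (n - k j.1) := by
    intro j
    have h1 := hμ j.1 j.2
    have h2 := hyk j.1 j.2
    have h3 : (0:ℝ) < n.choose (k j.1) := by exact_mod_cast Nat.choose_pos h2.2.2
    have hv : (0:ℝ) < 1 - μ j.1 := by linarith [h1.2]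
    have hv0 := h1.1
    positivity
  have hBpos : 0 < (P {ω | ∀ j, (∑ i : Fin n, X i j ω) = k j}).toReal := by
    rw [hBset, hB]
    exact Finset.prod_pos (fun j _ => hbpos j)
  refine ⟨hBpos, ?_⟩
  rw [hAset, hBset, hA, hB, ← Finset.prod_div_distrib]
  rw [Finset.prod_subtype (p := fun j : Fin d => m - 1 ≤ (j:ℕ))
    (univ.filter (fun j : Fin d => m - 1 ≤ (j:ℕ)))
    (fun x => ⟨fun h => (Finset.mem_filter.mp h).2,
      fun h => Finset.mem_filter.mpr ⟨Finset.mem_univ x, h⟩⟩)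
    (fun j : Fin d => if y j = 1 then ((k j : ℝ)/n)/ μ j else (1 - (k j : ℝ)/n)/(1 - μ j))]
  apply Finset.prod_congr rfl
  intro j _
  have h1 := hμ j.1 j.2
  have h2 := hyk j.1 j.2
  exact factor n (k j.1) (y j.1) (μ j.1) hn h2.1 h2.2.1 h2.2.2 h1.1 h1.2
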